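/- Every sequence (V_n)_{n∈ℕ} in 𝓕 has a subsequence (V_{n_k})_{k∈ℕ} and a limit V ∈ 𝓕 such that d(V_{n_k}, V) → 0 as k → ∞. -/

import Mathlib

/-- The upset of `A` within `[0,1]^K`: points of `[0,1]^K` dominating some point of `A`. -/
def upset (K : ℕ) (A : Set (Fin K → ℝ)) : Set (Fin K → ℝ) :=
  {x | x ∈ Set.Icc (0 : Fin K → ℝ) 1 ∧ ∃ y ∈ A, y ≤ x}

/-- Membership in the space `𝓕`: a nonempty Pareto frontier in `[0,1]^K`
(no element dominates a different element) whose upset is closed and convex. -/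
def memF (K : ℕ) (V : Set (Fin K → ℝ)) : Prop :=
  V.Nonempty ∧ V ⊆ Set.Icc (0 : Fin K → ℝ) 1 ∧
    (∀ u ∈ V, ∀ v ∈ V, u ≤ v → u = v) ∧
    IsClosed (upset K V) ∧ Convex ℝ (upset K V)

/-- The metric `d` on `𝓕`: Hausdorff distance (for the ℓ∞ norm) between upsets. -/
noncomputable def dF (K : ℕ) (U V : Set (Fin K → ℝ)) : ℝ :=
  Metric.hausdorffDist (upset K U) (upset K V)

open Set Metric Filter Topology

lemma upset_subset_Icc (K : ℕ) (A : Set (Fin K → ℝ)) :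
    upset K A ⊆ Set.Icc (0 : Fin K → ℝ) 1 := fun _ h => h.1

lemma mem_upset_of_le {K : ℕ} {A : Set (Fin K → ℝ)} {x y : Fin K → ℝ}
    (hx : x ∈ Set.Icc (0 : Fin K → ℝ) 1) (hy : y ∈ upset K A) (hyx : y ≤ x) :
    x ∈ upset K A := by
  obtain ⟨-, v, hv, hvy⟩ := hy
  exact ⟨hx, v, hv, le_trans hvy hyx⟩

/-- From a closed, convex, nonempty, upward-closed subset of the cube,
extract its set of minimal points: it is a Pareto frontier whose upset is the set. -/
lemma memF_exists_of_upsetlike {K : ℕ} (W : Set (Fin K → ℝ)) (hne : W.Nonempty)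
    (hsub : W ⊆ Set.Icc (0 : Fin K → ℝ) 1) (hcl : IsClosed W) (hconv : Convex ℝ W)
    (hup : ∀ x ∈ Set.Icc (0 : Fin K → ℝ) 1, ∀ y ∈ W, y ≤ x → x ∈ W) :
    ∃ V, memF K V ∧ upset K V = W := by
  classical
  set V : Set (Fin K → ℝ) := {x | x ∈ W ∧ ∀ y ∈ W, y ≤ x → y = x} with hVdef
  have hVW : V ⊆ W := fun v hv => hv.1
  -- every point of W dominates a minimal point
  have hmin : ∀ x ∈ W, ∃ m ∈ V, m ≤ x := by
    intro x hx
    set S : Set (Fin K → ℝ) := W ∩ Set.Iic x with hSdef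
    have hSne : S.Nonempty := ⟨x, hx, le_refl x⟩
    have hScl : IsClosed S := hcl.inter isClosed_Iic
    have hScomp : IsCompact S :=
      isCompact_Icc.of_isClosed_subset hScl (fun z hz => hsub hz.1)
    have hf : Continuous fun z : Fin K → ℝ => ∑ i, z i :=
      continuous_finset_sum Finset.univ (fun i _ => continuous_apply i)
    obtain ⟨m, hmS, hmmin⟩ := hScomp.exists_isMinOn hSne hf.continuousOn
    refine ⟨m, ⟨hmS.1, ?_⟩, hmS.2⟩
    intro y hyW hym
    have hyS : y ∈ S := ⟨hyW, le_trans hym hmS.2⟩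
    have h1 : ∑ i, m i ≤ ∑ i, y i := hmmin hyS
    have h2 : ∀ i ∈ Finset.univ, y i ≤ m i := fun i _ => hym i
    have h3 : (∑ i, y i) = ∑ i, m i := le_antisymm (Finset.sum_le_sum h2) h1
    have h4 := (Finset.sum_eq_sum_iff_of_le h2).mp h3
    funext i
    exact h4 i (Finset.mem_univ i)
  have hups : upset K V = W := by
    apply Set.Subset.antisymm
    · rintro x ⟨hxI, v, hvV, hvx⟩
      exact hup x hxI v (hVW hvV) hvx
    · intro x hx
      obtain ⟨m, hmV, hmx⟩ := hmin x hx
      exact ⟨hsub hx, m, hmV, hmx⟩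
  refine ⟨V, ⟨?_, fun v hv => hsub (hVW hv), ?_, ?_, ?_⟩, hups⟩
  · obtain ⟨x, hx⟩ := hne
    obtain ⟨m, hmV, -⟩ := hmin x hx
    exact ⟨m, hmV⟩
  · intro u hu v hv huv
    exact hv.2 u (hVW hu) huv
  · rw [hups]; exact hcl
  · rw [hups]; exact hconv

/-- every sequence in `𝓕` has a subsequence converging in `d` to some
element of `𝓕`. -/
theorem exists_convergent_subsequence {K : ℕ} (Vseq : ℕ → Set (Fin K → ℝ))
    (hmem : ∀ n, memF K (Vseq n)) :
    ∃ φ : ℕ → ℕ, StrictMono φ ∧ ∃ V : Set (Fin K → ℝ), memF K V ∧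
      Filter.Tendsto (fun k => dF K (Vseq (φ k)) V) Filter.atTop (nhds 0) := by
  classical
  set I : Set (Fin K → ℝ) := Set.Icc 0 1 with hIdef
  set U : ℕ → Set (Fin K → ℝ) := fun n => upset K (Vseq n) with hUdef
  have hUsub : ∀ n, U n ⊆ I := fun n => upset_subset_Icc K _
  have hUne : ∀ n, (U n).Nonempty := by
    intro n
    obtain ⟨v, hv⟩ := (hmem n).1
    exact ⟨v, (hmem n).2.1 hv, v, hv, le_refl v⟩
  have hUcl : ∀ n, IsClosed (U n) := fun n => (hmem n).2.2.2.1
  have hUconv : ∀ n, Convex ℝ (U n) := fun n => (hmem n).2.2.2.2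
  have hUcomp : ∀ n, IsCompact (U n) := fun n =>
    isCompact_Icc.of_isClosed_subset (hUcl n) (hUsub n)
  haveI : CompactSpace I := isCompact_iff_compactSpace.mp isCompact_Icc
  -- the sequence of upsets, viewed inside the compact cube
  have hpre : ∀ n, IsCompact (Subtype.val ⁻¹' U n : Set I) := fun n =>
    ((hUcl n).preimage continuous_subtype_val).isCompact
  have hprene : ∀ n, (Subtype.val ⁻¹' U n : Set I).Nonempty := by
    intro n
    obtain ⟨v, hv⟩ := hUne n
    exact ⟨⟨v, hUsub n hv⟩, hv⟩
  let s : ℕ → TopologicalSpace.NonemptyCompacts I := fun n => ⟨⟨_, hpre n⟩, hprene n⟩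
  obtain ⟨L, -, φ, hφ, hL⟩ :=
    isCompact_univ.tendsto_subseq (fun n => Set.mem_univ (s n))
  set W : Set (Fin K → ℝ) := Subtype.val '' (L : Set I) with hWdef
  have himg : ∀ n, Subtype.val '' ((s n : Set I)) = U n := by
    intro n
    show Subtype.val '' (Subtype.val ⁻¹' U n) = U n
    rw [Set.image_preimage_eq_inter_range, Subtype.range_coe]
    exact Set.inter_eq_self_of_subset_left (hUsub n)
  have hiso : Isometry (Subtype.val : I → Fin K → ℝ) := isometry_subtype_coe
  have hdist : ∀ k, dist (s (φ k)) L = hausdorffDist (U (φ k)) W := by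
    intro k
    rw [Metric.NonemptyCompacts.dist_eq, ← himg (φ k), hWdef]
    exact (hausdorffDist_image hiso).symm
  have hconv0 : Tendsto (fun k => hausdorffDist (U (φ k)) W) atTop (𝓝 0) := by
    have := tendsto_iff_dist_tendsto_zero.mp hL
    exact this.congr (fun k => hdist k)
  -- basic properties of W
  have Wne : W.Nonempty := L.nonempty.image _
  have Wsub : W ⊆ I := by rintro x ⟨y, -, rfl⟩; exact y.2
  have Wcomp : IsCompact W := L.isCompact.image continuous_subtype_val
  have Wcl : IsClosed W := Wcomp.isClosed
  have hfin : ∀ k, EMetric.hausdorffEdist (U (φ k)) W ≠ ⊤ := fun k =>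
    hausdorffEdist_ne_top_of_nonempty_of_bounded (hUne _) Wne
      (hUcomp _).isBounded Wcomp.isBounded
  -- limits of sequences chosen in the `U (φ k)` belong to W
  have hmemW : ∀ (x : Fin K → ℝ) (y : ℕ → Fin K → ℝ), (∀ k, y k ∈ U (φ k)) →
      Tendsto y atTop (𝓝 x) → x ∈ W := by
    intro x y hy hyx
    rw [Wcl.mem_iff_infDist_zero Wne]
    refine le_antisymm ?_ infDist_nonneg
    have hle : ∀ k, infDist x W ≤ dist x (y k) + hausdorffDist (U (φ k)) W := by
      intro k
      calc infDist x W ≤ infDist (y k) W + dist x (y k) := infDist_le_infDist_add_dist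
        _ ≤ hausdorffDist (U (φ k)) W + dist x (y k) :=
            add_le_add (infDist_le_hausdorffDist_of_mem (hy k) (hfin k)) le_rfl
        _ = dist x (y k) + hausdorffDist (U (φ k)) W := add_comm _ _
    have hrhs : Tendsto (fun k => dist x (y k) + hausdorffDist (U (φ k)) W) atTop (𝓝 0) := by
      have h1 : Tendsto (fun k => dist x (y k)) atTop (𝓝 0) := by
        have := tendsto_iff_dist_tendsto_zero.mp hyx
        exact this.congr (fun k => dist_comm (y k) x)
      simpa using h1.add hconv0
    exact ge_of_tendsto' hrhs hle
  -- every point of W is approximable by points of `U (φ k)`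
  have happrox : ∀ x ∈ W, ∃ y : ℕ → Fin K → ℝ,
      (∀ k, y k ∈ U (φ k)) ∧ Tendsto y atTop (𝓝 x) := by
    intro x hx
    have h1 : ∀ k, ∃ z ∈ U (φ k), infDist x (U (φ k)) = dist x z :=
      fun k => (hUcomp (φ k)).exists_infDist_eq_dist (hUne (φ k)) x
    choose y hyU hyd using h1
    refine ⟨y, hyU, ?_⟩
    rw [tendsto_iff_dist_tendsto_zero]
    refine squeeze_zero (fun k => dist_nonneg) (fun k => ?_) hconv0
    rw [dist_comm, ← hyd k]
    calc infDist x (U (φ k)) ≤ hausdorffDist W (U (φ k)) :=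
          infDist_le_hausdorffDist_of_mem hx
            (by rw [EMetric.hausdorffEdist_comm]; exact hfin k)
      _ = hausdorffDist (U (φ k)) W := hausdorffDist_comm
  -- W is upward closed inside the cube
  have hup : ∀ x ∈ I, ∀ w ∈ W, w ≤ x → x ∈ W := by
    intro x hxI w hwW hwx
    obtain ⟨y, hyU, hyw⟩ := happrox w hwW
    set z : ℕ → Fin K → ℝ := fun k => y k ⊔ x with hzdef
    have hzU : ∀ k, z k ∈ U (φ k) := by
      intro k
      have hzI : z k ∈ I := by
        constructor
        · exact le_trans hxI.1 le_sup_right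
        · exact sup_le ((hUsub (φ k)) (hyU k)).2 hxI.2
      exact mem_upset_of_le hzI (hyU k) le_sup_left
    have hzx : Tendsto z atTop (𝓝 x) := by
      rw [tendsto_iff_dist_tendsto_zero]
      have hb : Tendsto (fun k => dist (y k) w) atTop (𝓝 0) :=
        tendsto_iff_dist_tendsto_zero.mp hyw
      refine squeeze_zero (fun k => dist_nonneg) (fun k => ?_) hb
      rw [dist_pi_le_iff dist_nonneg]
      intro i
      have h1 : dist (y k i) (w i) ≤ dist (y k) w := dist_le_pi_dist _ _ i
      refine le_trans ?_ h1
      rw [Real.dist_eq, Real.dist_eq]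
      have hz : z k i = max (y k i) (x i) := rfl
      rw [hz, abs_of_nonneg (sub_nonneg.mpr (le_max_right _ _))]
      rcases le_total (y k i) (x i) with h | h
      · rw [max_eq_right h, sub_self]
        exact abs_nonneg _
      · rw [max_eq_left h]
        have : y k i - x i ≤ y k i - w i := by
          have := hwx i
          linarith
        exact le_trans this (le_abs_self _)
    exact hmemW x z hzU hzx
  -- W is convex
  have hconvW : Convex ℝ W := by
    intro x hx yy hyy a b ha hb hab
    obtain ⟨p, hpU, hpx⟩ := happrox x hx
    obtain ⟨q, hqU, hqy⟩ := happrox yy hyy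
    have hc : ∀ k, a • p k + b • q k ∈ U (φ k) :=
      fun k => hUconv (φ k) (hpU k) (hqU k) ha hb hab
    have ht : Tendsto (fun k => a • p k + b • q k) atTop (𝓝 (a • x + b • yy)) :=
      (hpx.const_smul a).add (hqy.const_smul b)
    exact hmemW _ _ hc ht
  obtain ⟨V, hVF, hVW⟩ := memF_exists_of_upsetlike W Wne Wsub Wcl hconvW hup
  refine ⟨φ, hφ, V, hVF, ?_⟩
  have heq : ∀ k, dF K (Vseq (φ k)) V = hausdorffDist (U (φ k)) W := by
    intro k
    rw [dF, hVW]
  exact hconv0.congr (fun k => (heq k).symm)
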